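/- Let X be a Banach space with a Schauder basis (e_n) with coordinate functionals (f_n), and let R_n denote the tail projections R_n x = x - Σ_{k≤n} f_k(x) e_k. Assume ‖R_n‖ = 1 for every n. If (α_n) ⊆ [0,1] is a non-decreasing sequence, then for every x ∈ X the series Σ α_n f_n(x) e_n converges and ‖Σ_{n=1}^∞ α_n f_n(x) e_n‖ ≤ ‖x‖. -/
import Mathlib


open Filter Finset Topology

/-- The tail projection `R_n = I - P_n` associated to a Schauder basis system,
where `P_n x = ∑_{k<n} f_k(x) e_k`. -/
noncomputable def tailProj {X : Type*} [NormedAddCommGroup X] [NormedSpace ℝ X]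
    (f : ℕ → X →L[ℝ] ℝ) (e : ℕ → X) (n : ℕ) : X →L[ℝ] X :=
  ContinuousLinearMap.id ℝ X - ∑ k ∈ Finset.range n, (f k).smulRight (e k)

theorem monotone_perturbation_nondecreasing
    {X : Type*} [NormedAddCommGroup X] [NormedSpace ℝ X] [CompleteSpace X]
    (e : ℕ → X) (f : ℕ → X →L[ℝ] ℝ)
    (hexp : ∀ x : X, Tendsto (fun n => ∑ k ∈ Finset.range n, f k x • e k) atTop (𝓝 x))
    (hbi : ∀ k j, f k (e j) = if k = j then (1 : ℝ) else 0)
    (hR : ∀ n, 1 ≤ n → ‖tailProj f e n‖ = 1)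
    (α : ℕ → ℝ) (hα : ∀ n, α n ∈ Set.Icc (0 : ℝ) 1) (hmono : Monotone α) (x : X) :
    ∃ L : X,
      Tendsto (fun n => ∑ k ∈ Finset.range n, α k • (f k x • e k)) atTop (𝓝 L) ∧
      ‖L‖ ≤ ‖x‖ := by
  set T : ℕ → X := fun n => ∑ k ∈ Finset.range n, α k • (f k x • e k) with hT
  have hRapp : ∀ n, tailProj f e n x = x - ∑ k ∈ Finset.range n, f k x • e k := by
    intro n
    simp [tailProj, ContinuousLinearMap.sub_apply, ContinuousLinearMap.sum_apply]
  have hRzero : Tendsto (fun n => tailProj f e n x) atTop (𝓝 0) := by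
    simp only [hRapp]
    have h := Tendsto.const_sub x (hexp x)
    simpa using h
  have hRzero' : Tendsto (fun n => ‖tailProj f e (n+1) x‖) atTop (𝓝 0) := by
    have := (hRzero.comp (tendsto_add_atTop_nat 1)).norm
    simpa using this
  have hstep : ∀ k, f k x • e k = tailProj f e k x - tailProj f e (k+1) x := by
    intro k
    simp only [hRapp, Finset.sum_range_succ]
    abel
  have hnorm : ∀ k, ‖tailProj f e (k+1) x‖ ≤ ‖x‖ := by
    intro k
    calc ‖tailProj f e (k+1) x‖ ≤ ‖tailProj f e (k+1)‖ * ‖x‖ :=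
          (tailProj f e (k+1)).le_opNorm x
    _ = ‖x‖ := by rw [hR (k+1) (by omega), one_mul]
  have hdiff : ∀ k, 0 ≤ α (k+1) - α k := fun k => sub_nonneg.2 (hmono (Nat.le_succ k))
  set s : ℕ → X := fun k => (α (k+1) - α k) • tailProj f e (k+1) x with hs
  have habel : ∀ n, T (n+1) = α 0 • x - α n • tailProj f e (n+1) x
      + ∑ k ∈ Finset.range n, s k := by
    intro n
    induction n with
    | zero =>
      have h0 : tailProj f e 0 x = x := by simp [hRapp]
      simp [hT, hs, hstep 0, h0, smul_sub]
    | succ n ih =>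
      have : T (n+1+1) = T (n+1) + α (n+1) • (f (n+1) x • e (n+1)) :=
        Finset.sum_range_succ _ _
      rw [this, ih, hstep (n+1), Finset.sum_range_succ]
      simp only [hs]
      module
  have hsle : ∀ k, ‖s k‖ ≤ (α (k+1) - α k) * ‖x‖ := by
    intro k
    rw [hs, norm_smul, Real.norm_eq_abs, abs_of_nonneg (hdiff k)]
    exact mul_le_mul_of_nonneg_left (hnorm k) (hdiff k)
  have hsum : Summable s := by
    apply Summable.of_norm
    apply Summable.of_nonneg_of_le (fun k => norm_nonneg _) hsle
    apply Summable.mul_right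
    apply summable_of_sum_range_le (c := 1) hdiff
    intro n
    rw [Finset.sum_range_sub]
    have := (hα n).2
    have := (hα 0).1
    linarith
  have hS := hsum.hasSum.tendsto_sum_nat
  set S := ∑' k, s k with hSdef
  have h1 : Tendsto (fun n => α n • tailProj f e (n+1) x) atTop (𝓝 0) := by
    apply squeeze_zero_norm (fun n => ?_) hRzero'
    rw [norm_smul, Real.norm_eq_abs, abs_of_nonneg (hα n).1]
    exact mul_le_of_le_one_left (norm_nonneg _) (hα n).2
  have hconv : Tendsto T atTop (𝓝 (α 0 • x + S)) := by
    rw [← tendsto_add_atTop_iff_nat 1]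
    have h2 : Tendsto (fun n => α 0 • x - α n • tailProj f e (n+1) x
        + ∑ k ∈ Finset.range n, s k) atTop (𝓝 (α 0 • x - 0 + S)) :=
      (tendsto_const_nhds.sub h1).add hS
    rw [sub_zero] at h2
    exact h2.congr (fun n => (habel n).symm)
  refine ⟨α 0 • x + S, hconv, ?_⟩
  have hbound : ∀ n, ‖T (n+1)‖ ≤ ‖x‖ + ‖tailProj f e (n+1) x‖ := by
    intro n
    have heq : T (n+1) = (α 0 • x + ∑ k ∈ Finset.range n, s k)
        - α n • tailProj f e (n+1) x := by rw [habel n]; abel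
    rw [heq]
    calc ‖(α 0 • x + ∑ k ∈ Finset.range n, s k) - α n • tailProj f e (n+1) x‖
        ≤ ‖α 0 • x + ∑ k ∈ Finset.range n, s k‖ + ‖α n • tailProj f e (n+1) x‖ :=
          norm_sub_le _ _
      _ ≤ (α 0 * ‖x‖ + ∑ k ∈ Finset.range n, (α (k+1) - α k) * ‖x‖)
          + ‖tailProj f e (n+1) x‖ := by
          gcongr
          · calc ‖α 0 • x + ∑ k ∈ Finset.range n, s k‖
                ≤ ‖α 0 • x‖ + ‖∑ k ∈ Finset.range n, s k‖ := norm_add_le _ _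
              _ ≤ α 0 * ‖x‖ + ∑ k ∈ Finset.range n, (α (k+1) - α k) * ‖x‖ := by
                  gcongr
                  · rw [norm_smul, Real.norm_eq_abs, abs_of_nonneg (hα 0).1]
                  · exact (norm_sum_le _ _).trans (Finset.sum_le_sum fun k _ => hsle k)
          · rw [norm_smul, Real.norm_eq_abs, abs_of_nonneg (hα n).1]
            exact mul_le_of_le_one_left (norm_nonneg _) (hα n).2
      _ ≤ ‖x‖ + ‖tailProj f e (n+1) x‖ := by
          rw [← Finset.sum_mul, Finset.sum_range_sub]
          have h1 := (hα n).2
          have h2 := norm_nonneg x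
          nlinarith
  have hTn : Tendsto (fun n => ‖T (n+1)‖) atTop (𝓝 ‖α 0 • x + S‖) :=
    ((hconv.comp (tendsto_add_atTop_nat 1)).norm)
  have hg : Tendsto (fun n => ‖x‖ + ‖tailProj f e (n+1) x‖) atTop (𝓝 (‖x‖ + 0)) :=
    tendsto_const_nhds.add hRzero'
  rw [add_zero] at hg
  exact le_of_tendsto_of_tendsto' hTn hg hbound
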